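/- Let F be an uncountable algebraically closed field, A a unital associative F-algebra of countable dimension, M a simple left A-module, and x a central element of A. Then there exists λ ∈ F such that x·m = λ·m for all m ∈ M (x acts on M by a scalar). -/

import Mathlib

open Polynomial in
/-- Dixmier's lemma: let `F` be an uncountable algebraically closed field, `A` a unital
associative `F`-algebra of countable dimension, `M` a simple left `A`-module, and `x` a
central element of `A`. Then there exists `λ ∈ F` such that `x` acts on `M` by the
scalar `λ`. -/
theorem central_element_acts_by_scalar {F A M : Type*} [Field F] [Uncountable F]
    [IsAlgClosed F] [Ring A] [Algebra F A]
    (hdim : Module.rank F A ≤ Cardinal.aleph0)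
    [AddCommGroup M] [Module A M] [IsSimpleModule A M]
    (x : A) (hx : ∀ a : A, x * a = a * x) :
    ∃ c : F, ∀ m : M, x • m = algebraMap F A c • m := by
  classical
  by_contra hcon
  push_neg at hcon
  -- the action of `x - algebraMap F A c` as an `A`-linear endomorphism
  have hxc : ∀ (c : F) (a : A), (x - algebraMap F A c) * a = a * (x - algebraMap F A c) := by
    intro c a
    rw [sub_mul, mul_sub, hx, Algebra.commutes]
  let f : F → M →ₗ[A] M := fun c =>
    { toFun := fun m => (x - algebraMap F A c) • m
      map_add' := fun m n => smul_add _ _ _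
      map_smul' := fun a m => by
        simp only [RingHom.id_apply]
        rw [← mul_smul, hxc, mul_smul] }
  -- Schur: each `f c` is bijective
  have hbij : ∀ c, Function.Bijective (f c) := by
    intro c
    rcases (f c).bijective_or_eq_zero with h | h
    · exact h
    · exfalso
      obtain ⟨m, hm⟩ := hcon c
      apply hm
      have h0 : (x - algebraMap F A c) • m = 0 := by
        have := LinearMap.ext_iff.mp h m
        simpa [f] using this
      rw [sub_smul] at h0
      exact sub_eq_zero.mp h0
  -- products of the operators act injectively
  have hinj : ∀ (T : List F), ∀ m : M,
      (T.map (fun r => x - algebraMap F A r)).prod • m = 0 → m = 0 := by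
    intro T
    induction T with
    | nil => intro m h; simpa using h
    | cons r T ih =>
      intro m h
      rw [List.map_cons, List.prod_cons, mul_smul] at h
      have h2 : f r ((T.map (fun r => x - algebraMap F A r)).prod • m) = f r 0 := by
        rw [map_zero]; exact h
      exact ih _ ((hbij r).1 h2)
  -- a nonzero vector
  haveI : Nontrivial M := IsSimpleModule.nontrivial A M
  obtain ⟨m₀, hm₀⟩ := exists_ne (0 : M)
  -- preimages of m₀
  choose v hv using fun c => (hbij c).2 m₀
  have hv' : ∀ c, (x - algebraMap F A c) • v c = m₀ := fun c => hv c
  -- F-module structure on M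
  letI : Module F M := Module.compHom M (algebraMap F A)
  have hsmul : ∀ (c : F) (m : M), c • m = algebraMap F A c • m := fun c m => rfl
  -- M has countable dimension over F
  have hspan : Submodule.span A {m₀} = ⊤ := by
    rcases eq_bot_or_eq_top (Submodule.span A {m₀}) with h | h
    · exfalso
      apply hm₀
      have hmem := Submodule.mem_span_singleton_self (R := A) m₀
      rw [h, Submodule.mem_bot] at hmem
      exact hmem
    · exact h
  have hsurj : Function.Surjective (fun a : A => a • m₀) := by
    intro m
    have hmem : m ∈ Submodule.span A {m₀} := by rw [hspan]; exact Submodule.mem_top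
    exact Submodule.mem_span_singleton.mp hmem
  let ℓ : A →ₗ[F] M :=
    { toFun := fun a => a • m₀
      map_add' := fun a b => add_smul a b m₀
      map_smul' := fun c a => by
        simp only [RingHom.id_apply]
        rw [hsmul, Algebra.smul_def, mul_smul] }
  have hrank : Module.rank F M ≤ Cardinal.aleph0 := by
    have h1 := LinearMap.lift_rank_le_of_surjective ℓ hsurj
    have h2 := h1.trans (Cardinal.lift_le.mpr hdim)
    rwa [Cardinal.lift_aleph0, Cardinal.lift_le_aleph0] at h2
  -- the family v is not linearly independent
  have hnli : ¬ LinearIndependent F v := by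
    intro hli
    have h1 := hli.cardinal_lift_le_rank
    have h2 := h1.trans (Cardinal.lift_le.mpr hrank)
    rw [Cardinal.lift_aleph0, Cardinal.lift_le_aleph0] at h2
    exact absurd h2 (not_le.mpr Cardinal.aleph0_lt_mk)
  rw [linearIndependent_iff'] at hnli
  push_neg at hnli
  obtain ⟨s, g, hsum, i₀, hi₀, hg₀⟩ := hnli
  -- restrict to nonzero coefficients
  set t : Finset F := s.filter (fun i => g i ≠ 0) with ht
  have hi₀t : i₀ ∈ t := Finset.mem_filter.mpr ⟨hi₀, hg₀⟩
  have hgt : ∀ i ∈ t, g i ≠ 0 := fun i hi => (Finset.mem_filter.mp hi).2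
  have hsum' : ∑ i ∈ t, g i • v i = 0 := by
    rw [← hsum]
    apply Finset.sum_subset (Finset.filter_subset _ _)
    intro i hi hnot
    have hgz : g i = 0 := by
      by_contra hne
      exact hnot (Finset.mem_filter.mpr ⟨hi, hne⟩)
    rw [hgz, zero_smul]
  -- the polynomial
  set p : F[X] := ∑ i ∈ t, Polynomial.C (g i) * ∏ j ∈ t.erase i, (Polynomial.X - Polynomial.C j)
    with hp
  have hpe : p.eval i₀ = g i₀ * ∏ j ∈ t.erase i₀, (i₀ - j) := by
    rw [hp, Polynomial.eval_finset_sum]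
    rw [Finset.sum_eq_single i₀]
    · simp [Polynomial.eval_prod]
    · intro i hi hne
      have hmem : i₀ ∈ t.erase i := Finset.mem_erase.mpr ⟨Ne.symm hne, hi₀t⟩
      rw [Polynomial.eval_mul, Polynomial.eval_prod]
      rw [Finset.prod_eq_zero hmem (by simp)]
      ring
    · intro h; exact absurd hi₀t h
  have hpe0 : p.eval i₀ ≠ 0 := by
    rw [hpe]
    apply mul_ne_zero (hgt i₀ hi₀t)
    apply Finset.prod_ne_zero_iff.mpr
    intro j hj
    have := (Finset.mem_erase.mp hj).1
    exact sub_ne_zero.mpr (Ne.symm this)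
  have hp0 : p ≠ 0 := fun h => hpe0 (by rw [h, Polynomial.eval_zero])
  -- aeval x p kills m₀
  set Q : A := Polynomial.aeval x (∏ j ∈ t, (Polynomial.X - Polynomial.C j)) with hQ
  have key : (Polynomial.aeval x p) • m₀ = 0 := by
    have hterm : ∀ i ∈ t,
        (Polynomial.aeval x (Polynomial.C (g i) * ∏ j ∈ t.erase i,
          (Polynomial.X - Polynomial.C j))) • m₀ = Q • (g i • v i) := by
      intro i hi
      have hXC : x - algebraMap F A i = Polynomial.aeval x (Polynomial.X - Polynomial.C i) := by
        simp
      rw [hsmul, ← mul_smul, map_mul, Polynomial.aeval_C, ← hv' i, smul_smul, mul_assoc,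
        hXC, ← map_mul, Finset.prod_erase_mul t _ hi, ← hQ, Algebra.commutes]
    calc (Polynomial.aeval x p) • m₀
        = ∑ i ∈ t, (Polynomial.aeval x (Polynomial.C (g i) * ∏ j ∈ t.erase i,
            (Polynomial.X - Polynomial.C j))) • m₀ := by
          rw [hp, map_sum, Finset.sum_smul]
      _ = ∑ i ∈ t, Q • (g i • v i) := Finset.sum_congr rfl hterm
      _ = Q • ∑ i ∈ t, g i • v i := (Finset.smul_sum).symm
      _ = 0 := by rw [hsum', smul_zero]
  -- factor p into linear factors
  have hfac : p = Polynomial.C p.leadingCoeff *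
      (p.roots.toList.map fun a => Polynomial.X - Polynomial.C a).prod := by
    conv_lhs => rw [Polynomial.Splits.eq_prod_roots (IsAlgClosed.splits p)]
    congr 1
    rw [← Multiset.coe_toList p.roots, Multiset.map_coe, Multiset.prod_coe,
      Multiset.coe_toList]
  have haev : Polynomial.aeval x p = algebraMap F A p.leadingCoeff *
      (p.roots.toList.map (fun r => x - algebraMap F A r)).prod := by
    conv_lhs => rw [hfac]
    rw [map_mul, Polynomial.aeval_C, map_list_prod, List.map_map]
    have hfun : (⇑(Polynomial.aeval x) ∘ fun a : F => Polynomial.X - Polynomial.C a)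
        = fun r : F => x - algebraMap F A r := by
      funext a
      simp [Function.comp]
    rw [hfun]
  have hlc : p.leadingCoeff ≠ 0 := Polynomial.leadingCoeff_ne_zero.mpr hp0
  have h3 : ((p.roots.toList.map (fun r => x - algebraMap F A r)).prod) • m₀ = 0 := by
    have h4 : algebraMap F A p.leadingCoeff •
        (((p.roots.toList.map (fun r => x - algebraMap F A r)).prod) • m₀) = 0 := by
      rw [← mul_smul, ← haev]; exact key
    have h5 : (algebraMap F A (p.leadingCoeff⁻¹) * algebraMap F A p.leadingCoeff) •
        (((p.roots.toList.map (fun r => x - algebraMap F A r)).prod) • m₀) = 0 := by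
      rw [mul_smul, h4, smul_zero]
    rwa [← map_mul, inv_mul_cancel₀ hlc, map_one, one_smul] at h5
  exact hm₀ (hinj _ _ h3)
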